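/- Let x₁, x₂ be Boolean independent and g = a x₁x₂ + b x₂x₁. With d = ab β₂(x₁)β₂(x₂), α₁ = (a+b)β₁(x₁)β₁(x₂), α₂ = ab(β₁(x₁)²β₂(x₂) + β₁(x₂)²β₂(x₁)), and ω = √(α₁² + 4(d + α₂)), the moments of g are m_k(g) = (1/ω)((α₁+ω)/2)^{k−1}(α₁(α₁+ω)/2 + α₂) − (1/ω)((α₁−ω)/2)^{k−1}(α₁(α₁−ω)/2 + α₂) for all k ≥ 1; equivalently, g has the two-atom distribution ((α₁θ₁+α₂)/(ωθ₁)) δ_{θ₁} − ((α₁θ₂+α₂)/(ωθ₂)) δ_{θ₂} with θ₁ = (α₁+ω)/2, θ₂ = (α₁−ω)/2. -/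

import Mathlib

open Finset

/-- `x₁, x₂` are Boolean independent in `(A, φ)`: `φ` factorizes over alternating
words from the non-unital subalgebras generated by `x₁` resp. `x₂`. -/
def BoolPair {A : Type*} [Ring A] [Algebra ℂ A] (φ : A →ₗ[ℂ] ℂ) (x₁ x₂ : A) : Prop :=
  ∀ (n : ℕ) (y : Fin n → A) (idx : Fin n → Fin 2),
    (∀ (i : Fin n) (h : i.val + 1 < n), idx i ≠ idx ⟨i.val + 1, h⟩) →
    (∀ i, y i ∈ NonUnitalAlgebra.adjoin ℂ ({![x₁, x₂] (idx i)} : Set A)) →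
    φ (List.ofFn y).prod = ∏ i, φ (y i)

section Aux

variable {A : Type*} [Ring A] [Algebra ℂ A]
open scoped Fin.NatCast Fin.CommRing

def AltL (x₁ x₂ : A) : Fin 2 → List A → Prop
  | _, [] => True
  | c, z :: t => z ∈ NonUnitalAlgebra.adjoin ℂ ({![x₁, x₂] c} : Set A) ∧ AltL x₁ x₂ (1 - c) t

lemma altL_nil (x₁ x₂ : A) (c : Fin 2) : AltL x₁ x₂ c [] := trivial

lemma altL_cons {x₁ x₂ z : A} {c : Fin 2} {t : List A} :
    AltL x₁ x₂ c (z :: t) ↔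
      z ∈ NonUnitalAlgebra.adjoin ℂ ({![x₁, x₂] c} : Set A) ∧ AltL x₁ x₂ (1 - c) t := Iff.rfl

lemma AltL.get {x₁ x₂ : A} : ∀ {L : List A} {c : Fin 2}, AltL x₁ x₂ c L →
    ∀ i : Fin L.length,
      L.get i ∈ NonUnitalAlgebra.adjoin ℂ ({![x₁, x₂] (c + (i.val : Fin 2))} : Set A) := by
  intro L
  induction L with
  | nil => intro c _ i; exact absurd i.isLt (by simp)
  | cons z t ih =>
    intro c h i
    obtain ⟨hz, ht⟩ := h
    cases i using Fin.cases with
    | zero => simpa using hz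
    | succ j =>
      have h2 := ih ht j
      have hc : (1 - c) + (j.val : Fin 2) = c + ((j.val + 1 : ℕ) : Fin 2) := by
        have h1 : ∀ x : Fin 2, 1 - x = x + 1 := by decide
        push_cast
        rw [h1 c]; ring
      rw [hc] at h2
      simpa using h2

lemma altProd (φ : A →ₗ[ℂ] ℂ) (x₁ x₂ : A) (hbool : BoolPair φ x₁ x₂) :
    ∀ (c : Fin 2) (L : List A), AltL x₁ x₂ c L → φ L.prod = (L.map φ).prod := by
  intro c L hL
  have hadj : ∀ (i : Fin L.length) (h : i.val + 1 < L.length),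
      (fun i : Fin L.length => c + (i.val : Fin 2)) i
        ≠ (fun i : Fin L.length => c + (i.val : Fin 2)) ⟨i.val + 1, h⟩ := by
    intro i h
    simp only
    have h1 : ((i.val + 1 : ℕ) : Fin 2) = (i.val : Fin 2) + 1 := by push_cast; ring
    rw [h1]
    have h2 : ∀ x y : Fin 2, x + y ≠ x + (y + 1) := by decide
    exact h2 _ _
  have h := hbool L.length L.get (fun i => c + (i.val : Fin 2)) hadj (AltL.get hL)
  rw [List.ofFn_get] at h
  rw [h, ← List.prod_ofFn]
  congr 1
  conv_rhs => rw [← List.ofFn_get L, List.map_ofFn]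
  rfl

def stepP (a b bet gam p q : ℂ) : ℂ × ℂ → ℂ × ℂ :=
  fun uv => (a * (uv.1 * (bet * gam) + uv.2 * p), b * (uv.1 * q + uv.2 * (bet * gam)))

def UVs (a b bet gam p q : ℂ) : ℕ → ℂ × ℂ :=
  fun n => (stepP a b bet gam p q)^[n] (a * bet, b * gam)

lemma UVs_zero (a b bet gam p q : ℂ) : UVs a b bet gam p q 0 = (a * bet, b * gam) := rfl

lemma UVs_succ (a b bet gam p q : ℂ) (n : ℕ) :
    UVs a b bet gam p q (n + 1) = stepP a b bet gam p q (UVs a b bet gam p q n) :=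
  Function.iterate_succ_apply' _ _ _

noncomputable def Rtwo (α₁ α₂ ω : ℂ) (n : ℕ) : ℂ :=
  1 / ω * ((α₁ + ω) / 2) ^ n * (α₁ * ((α₁ + ω) / 2) + α₂)
    - 1 / ω * ((α₁ - ω) / 2) ^ n * (α₁ * ((α₁ - ω) / 2) + α₂)

end Aux

/-- For Boolean independent `x₁, x₂` and `g = a x₁x₂ + b x₂x₁`, with
`d = ab β₂(x₁)β₂(x₂)`, `α₁ = (a+b)β₁(x₁)β₁(x₂)`,
`α₂ = ab(β₁(x₁)²β₂(x₂) + β₁(x₂)²β₂(x₁))` and `ω = √(α₁² + 4(d + α₂))` (nonzero),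
the moments of `g` are
`m_k(g) = (1/ω)((α₁+ω)/2)^{k−1}(α₁(α₁+ω)/2 + α₂) − (1/ω)((α₁−ω)/2)^{k−1}(α₁(α₁−ω)/2 + α₂)`
for all `k ≥ 1` (equivalently, `g` has the stated two-atom distribution). -/
theorem stmt17 {A : Type*} [Ring A] [Algebra ℂ A]
    (φ : A →ₗ[ℂ] ℂ) (hφ1 : φ 1 = 1)
    (x₁ x₂ : A) (hbool : BoolPair φ x₁ x₂)
    (a b : ℂ) (g : A) (hg : g = a • (x₁ * x₂) + b • (x₂ * x₁))
    (d α₁ α₂ ω : ℂ)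
    (hd : d = a * b * (φ (x₁ ^ 2) - (φ x₁) ^ 2) * (φ (x₂ ^ 2) - (φ x₂) ^ 2))
    (hα₁ : α₁ = (a + b) * φ x₁ * φ x₂)
    (hα₂ : α₂ = a * b * ((φ x₁) ^ 2 * (φ (x₂ ^ 2) - (φ x₂) ^ 2)
        + (φ x₂) ^ 2 * (φ (x₁ ^ 2) - (φ x₁) ^ 2)))
    (hω : ω ^ 2 = α₁ ^ 2 + 4 * (d + α₂)) (hω0 : ω ≠ 0) :
    ∀ k : ℕ, 1 ≤ k →
      φ (g ^ k)
        = 1 / ω * ((α₁ + ω) / 2) ^ (k - 1) * (α₁ * ((α₁ + ω) / 2) + α₂)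
          - 1 / ω * ((α₁ - ω) / 2) ^ (k - 1) * (α₁ * ((α₁ - ω) / 2) + α₂) := by
  have h10 : (1 - 0 : Fin 2) = 1 := by decide
  have h11 : (1 - 1 : Fin 2) = 0 := by decide
  have hm1 : x₁ ∈ NonUnitalAlgebra.adjoin ℂ ({x₁} : Set A) :=
    NonUnitalAlgebra.self_mem_adjoin_singleton ℂ x₁
  have hm2 : x₂ ∈ NonUnitalAlgebra.adjoin ℂ ({x₂} : Set A) :=
    NonUnitalAlgebra.self_mem_adjoin_singleton ℂ x₂
  set UV : ℕ → ℂ × ℂ := UVs a b (φ x₁) (φ x₂) (φ (x₁ ^ 2)) (φ (x₂ ^ 2)) with hUV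
  have hUVz : UV 0 = (a * φ x₁, b * φ x₂) := rfl
  have hUVs : ∀ n, UV (n + 1)
      = stepP a b (φ x₁) (φ x₂) (φ (x₁ ^ 2)) (φ (x₂ ^ 2)) (UV n) :=
    fun n => UVs_succ _ _ _ _ _ _ n
  have hp1 : x₁ * x₁ = x₁ ^ 2 := (pow_two x₁).symm
  have hp2 : x₂ * x₂ = x₂ ^ 2 := (pow_two x₂).symm
  have inv : ∀ n : ℕ, ∀ (z : A) (t : List A),
      (z ∈ NonUnitalAlgebra.adjoin ℂ ({x₁} : Set A) → AltL x₁ x₂ 1 t →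
        φ (g ^ (n + 1) * (z * t.prod))
          = (UV n).1 * (φ x₂ * (φ z * (t.map φ).prod))
            + (UV n).2 * (φ (x₁ * z) * (t.map φ).prod)) ∧
      (z ∈ NonUnitalAlgebra.adjoin ℂ ({x₂} : Set A) → AltL x₁ x₂ 0 t →
        φ (g ^ (n + 1) * (z * t.prod))
          = (UV n).1 * (φ (x₂ * z) * (t.map φ).prod)
            + (UV n).2 * (φ x₁ * (φ z * (t.map φ).prod))) := by
    intro n
    induction n with
    | zero =>
      intro z t
      constructor
      · intro hz ht
        have hL : g * (z * t.prod)
            = a • ((x₁ :: x₂ :: z :: t).prod) + b • ((x₂ :: (x₁ * z) :: t).prod) := by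
          simp only [hg, List.prod_cons, add_mul, smul_mul_assoc, mul_assoc]
        have a1 : AltL x₁ x₂ 0 (x₁ :: x₂ :: z :: t) := by
          refine altL_cons.mpr ⟨hm1, ?_⟩
          rw [h10]
          refine altL_cons.mpr ⟨hm2, ?_⟩
          rw [h11]
          exact altL_cons.mpr ⟨hz, by rw [h10]; exact ht⟩
        have a2 : AltL x₁ x₂ 1 (x₂ :: (x₁ * z) :: t) := by
          refine altL_cons.mpr ⟨hm2, ?_⟩
          rw [h11]
          exact altL_cons.mpr ⟨mul_mem hm1 hz, by rw [h10]; exact ht⟩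
        rw [pow_one, hL]
        simp only [map_add, map_smul, smul_eq_mul,
          altProd φ x₁ x₂ hbool 0 _ a1, altProd φ x₁ x₂ hbool 1 _ a2]
        simp only [List.map_cons, List.prod_cons, hUVz]
        ring
      · intro hz ht
        have hL : g * (z * t.prod)
            = a • ((x₁ :: (x₂ * z) :: t).prod) + b • ((x₂ :: x₁ :: z :: t).prod) := by
          simp only [hg, List.prod_cons, add_mul, smul_mul_assoc, mul_assoc]
        have a1 : AltL x₁ x₂ 0 (x₁ :: (x₂ * z) :: t) := by
          refine altL_cons.mpr ⟨hm1, ?_⟩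
          rw [h10]
          exact altL_cons.mpr ⟨mul_mem hm2 hz, by rw [h11]; exact ht⟩
        have a2 : AltL x₁ x₂ 1 (x₂ :: x₁ :: z :: t) := by
          refine altL_cons.mpr ⟨hm2, ?_⟩
          rw [h11]
          refine altL_cons.mpr ⟨hm1, ?_⟩
          rw [h10]
          exact altL_cons.mpr ⟨hz, by rw [h11]; exact ht⟩
        rw [pow_one, hL]
        simp only [map_add, map_smul, smul_eq_mul,
          altProd φ x₁ x₂ hbool 0 _ a1, altProd φ x₁ x₂ hbool 1 _ a2]
        simp only [List.map_cons, List.prod_cons, hUVz]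
        ring
    | succ n ih =>
      intro z t
      constructor
      · intro hz ht
        have hL : g ^ (n + 1 + 1) * (z * t.prod)
            = a • (g ^ (n + 1) * (x₁ * ((x₂ :: z :: t).prod)))
              + b • (g ^ (n + 1) * (x₂ * (((x₁ * z) :: t).prod))) := by
          rw [pow_succ, mul_assoc, hg]
          simp only [List.prod_cons, add_mul, smul_mul_assoc, mul_assoc, mul_add,
            mul_smul_comm]
        have a1 : AltL x₁ x₂ 1 (x₂ :: z :: t) := by
          refine altL_cons.mpr ⟨hm2, ?_⟩
          rw [h11]
          exact altL_cons.mpr ⟨hz, by rw [h10]; exact ht⟩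
        have a2 : AltL x₁ x₂ 0 ((x₁ * z) :: t) := by
          exact altL_cons.mpr ⟨mul_mem hm1 hz, by rw [h10]; exact ht⟩
        rw [hL]
        simp only [map_add, map_smul, smul_eq_mul,
          (ih x₁ (x₂ :: z :: t)).1 hm1 a1, (ih x₂ ((x₁ * z) :: t)).2 hm2 a2]
        simp only [List.map_cons, List.prod_cons, hUVs, stepP, hp1, hp2]
        ring
      · intro hz ht
        have hL : g ^ (n + 1 + 1) * (z * t.prod)
            = a • (g ^ (n + 1) * (x₁ * (((x₂ * z) :: t).prod)))
              + b • (g ^ (n + 1) * (x₂ * ((x₁ :: z :: t).prod))) := by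
          rw [pow_succ, mul_assoc, hg]
          simp only [List.prod_cons, add_mul, smul_mul_assoc, mul_assoc, mul_add,
            mul_smul_comm]
        have a1 : AltL x₁ x₂ 1 ((x₂ * z) :: t) := by
          exact altL_cons.mpr ⟨mul_mem hm2 hz, by rw [h11]; exact ht⟩
        have a2 : AltL x₁ x₂ 0 (x₁ :: z :: t) := by
          refine altL_cons.mpr ⟨hm1, ?_⟩
          rw [h10]
          exact altL_cons.mpr ⟨hz, by rw [h11]; exact ht⟩
        rw [hL]
        simp only [map_add, map_smul, smul_eq_mul,
          (ih x₁ ((x₂ * z) :: t)).1 hm1 a1, (ih x₂ (x₁ :: z :: t)).2 hm2 a2]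
        simp only [List.map_cons, List.prod_cons, hUVs, stepP, hp1, hp2]
        ring
  have mom : ∀ n : ℕ, φ (g ^ (n + 1)) = (UV n).1 * φ x₂ + (UV n).2 * φ x₁ := by
    intro n
    cases n with
    | zero =>
      have hL : g = a • (([x₁, x₂] : List A).prod) + b • (([x₂, x₁] : List A).prod) := by
        simp [hg]
      have a1 : AltL x₁ x₂ 0 [x₁, x₂] := by
        refine altL_cons.mpr ⟨hm1, ?_⟩
        rw [h10]
        exact altL_cons.mpr ⟨hm2, by rw [h11]; exact altL_nil _ _ _⟩
      have a2 : AltL x₁ x₂ 1 [x₂, x₁] := by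
        refine altL_cons.mpr ⟨hm2, ?_⟩
        rw [h11]
        exact altL_cons.mpr ⟨hm1, by rw [h10]; exact altL_nil _ _ _⟩
      rw [pow_one, hL]
      simp only [map_add, map_smul, smul_eq_mul,
        altProd φ x₁ x₂ hbool 0 _ a1, altProd φ x₁ x₂ hbool 1 _ a2]
      simp only [List.map_cons, List.map_nil, List.prod_cons, List.prod_nil, hUVz]
      ring
    | succ n =>
      have hL : g ^ (n + 1 + 1)
          = a • (g ^ (n + 1) * (x₁ * (([x₂] : List A).prod)))
            + b • (g ^ (n + 1) * (x₂ * (([x₁] : List A).prod))) := by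
        rw [pow_succ, hg]
        simp only [List.prod_cons, List.prod_nil, mul_one, mul_add, mul_smul_comm]
      rw [hL]
      simp only [map_add, map_smul, smul_eq_mul,
        (inv n x₁ [x₂]).1 hm1 (altL_cons.mpr ⟨hm2, by rw [h11]; exact altL_nil _ _ _⟩),
        (inv n x₂ [x₁]).2 hm2 (altL_cons.mpr ⟨hm1, by rw [h10]; exact altL_nil _ _ _⟩)]
      simp only [List.map_cons, List.map_nil, List.prod_cons, List.prod_nil, hUVs,
        stepP, hp1, hp2]
      ring
  have hA1 : α₁ = (a + b) * (φ x₁ * φ x₂) := by rw [hα₁]; ring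
  have hD : d + α₂ = a * b * (φ (x₁ ^ 2) * φ (x₂ ^ 2) - (φ x₁ * φ x₂) ^ 2) := by
    rw [hd, hα₂]; ring
  have key : ∀ n : ℕ,
      ((UV n).1 * φ x₂ + (UV n).2 * φ x₁ = Rtwo α₁ α₂ ω n) ∧
      ((UV (n + 1)).1 * φ x₂ + (UV (n + 1)).2 * φ x₁ = Rtwo α₁ α₂ ω (n + 1)) := by
    intro n
    induction n with
    | zero =>
      constructor
      · rw [hUVz]
        unfold Rtwo
        rw [hα₁]
        field_simp
        ring
      · rw [hUVs 0, hUVz]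
        simp only [stepP]
        unfold Rtwo
        rw [hα₁, hα₂]
        field_simp
        ring
    | succ n ih =>
      refine ⟨ih.2, ?_⟩
      have hM : (UV (n + 1 + 1)).1 * φ x₂ + (UV (n + 1 + 1)).2 * φ x₁
          = α₁ * ((UV (n + 1)).1 * φ x₂ + (UV (n + 1)).2 * φ x₁)
            + (d + α₂) * ((UV n).1 * φ x₂ + (UV n).2 * φ x₁) := by
        rw [hD, hA1, hUVs (n + 1), hUVs n]
        simp only [stepP]
        ring
      have hR : Rtwo α₁ α₂ ω (n + 1 + 1)
          = α₁ * Rtwo α₁ α₂ ω (n + 1) + (d + α₂) * Rtwo α₁ α₂ ω n := by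
        unfold Rtwo
        simp only [pow_succ]
        linear_combination (1 / (4 * ω) * (((α₁ + ω) / 2) ^ n * (α₁ * ((α₁ + ω) / 2) + α₂)
          - ((α₁ - ω) / 2) ^ n * (α₁ * ((α₁ - ω) / 2) + α₂))) * hω
      rw [hM, ih.1, ih.2]
      exact hR.symm
  intro k hk
  obtain ⟨n, rfl⟩ : ∃ n, k = n + 1 := ⟨k - 1, by omega⟩
  simp only [Nat.add_sub_cancel]
  rw [mom n, (key n).1]
  rfl
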